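/- arXiv:math/0412438 — 3 statements merged into one kernel-verified Lean document; each statement's English description precedes it below -/
import Mathlib

section
/- Let a, b ∈ ℂ with b ≠ 0, let δ > 0, and let α, β, γ : (0, δ) → ℂ be functions such that for every t ∈ (0, δ) the polynomial identity b·t·X³ − X² + (a·t − 2)·X + (2·b·t − 1) = b·t·(X − α(t))·(X − β(t))·(X − γ(t)) holds in ℂ[X], and suppose |γ(t)| → ∞ as t → 0⁺. Then (α(t)² − 1)² / (1 − α(t)·β(t)) → (b − a)/b as t → 0⁺. -/
noncomputable section

open Filter Topology Polynomial

private lemma div_div_same_aux (x y e : ℂ) (he : e ≠ 0) : (x / e) / (y / e) = x / y := by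
  rcases eq_or_ne y 0 with h | h
  · simp [h]
  · field_simp

set_option maxHeartbeats 1000000 in
/-- The multiplier computation of the paper (case `q = 2`): if for `t ∈ (0, δ)` the
numbers `α(t), β(t), γ(t)` are the three roots of
`b t X³ - X² + (a t - 2) X + (2 b t - 1)`, with `|γ(t)| → ∞` as `t → 0⁺`, then
`(α(t)² - 1)² / (1 - α(t) β(t)) → (b - a)/b` as `t → 0⁺`. -/
theorem multiplier_limit (a b : ℂ) (hb : b ≠ 0) (δ : ℝ) (hδ : 0 < δ)
    (α β γ : ℝ → ℂ)
    (hroots : ∀ t ∈ Set.Ioo (0 : ℝ) δ,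
      C (b * (t : ℂ)) * X ^ 3 - X ^ 2 + C (a * (t : ℂ) - 2) * X + C (2 * b * (t : ℂ) - 1) =
        C (b * (t : ℂ)) * (X - C (α t)) * (X - C (β t)) * (X - C (γ t)))
    (hγ : Tendsto (fun t : ℝ => ‖γ t‖) (𝓝[>] 0) atTop) :
    Tendsto (fun t : ℝ => ((α t) ^ 2 - 1) ^ 2 / (1 - α t * β t)) (𝓝[>] 0)
      (𝓝 ((b - a) / b)) := by
  -- Vieta relations from the polynomial identity
  have hV : ∀ t ∈ Set.Ioo (0:ℝ) δ,
      b * (t:ℂ) * (α t + β t + γ t) = 1 ∧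
      b * (t:ℂ) * (α t * β t + α t * γ t + β t * γ t) = a * (t:ℂ) - 2 ∧
      b * (t:ℂ) * (α t * β t * γ t) = 1 - 2 * (b * (t:ℂ)) := by
    intro t ht
    have h := hroots t ht
    have h0 := congrArg (eval 0) h
    have h1 := congrArg (eval 1) h
    have hm1 := congrArg (eval (-1)) h
    simp only [eval_add, eval_sub, eval_mul, eval_pow, eval_C, eval_X, eval_one] at h0 h1 hm1
    refine ⟨?_, ?_, ?_⟩
    · linear_combination (1/2 : ℂ) * h1 + (1/2 : ℂ) * hm1 - h0
    · linear_combination (-1/2 : ℂ) * h1 + (1/2 : ℂ) * hm1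
    · linear_combination h0
  -- basic eventual facts
  have hIoo : ∀ᶠ t : ℝ in 𝓝[>] (0:ℝ), t ∈ Set.Ioo (0:ℝ) δ :=
    Ioo_mem_nhdsGT_of_mem ⟨le_refl 0, hδ⟩
  have hγ0 : ∀ᶠ t : ℝ in 𝓝[>] (0:ℝ), γ t ≠ 0 := by
    filter_upwards [hγ.eventually_ge_atTop 1] with t ht h
    rw [h] at ht; simp at ht
    exact absurd ht (by norm_num)
  have hε0 : ∀ᶠ t : ℝ in 𝓝[>] (0:ℝ), b * (t:ℂ) ≠ 0 := by
    filter_upwards [hIoo] with t ht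
    exact mul_ne_zero hb (Complex.ofReal_ne_zero.mpr (ne_of_gt ht.1))
  have hU0 : ∀ᶠ t : ℝ in 𝓝[>] (0:ℝ), b * (t:ℂ) * γ t ≠ 0 := by
    filter_upwards [hε0, hγ0] with t h1 h2
    exact mul_ne_zero h1 h2
  -- basic limits
  have ht0c : Tendsto (fun t : ℝ => (t:ℂ)) (𝓝[>] (0:ℝ)) (𝓝 0) := by
    have h := Complex.continuous_ofReal.tendsto 0
    simpa using h.mono_left nhdsWithin_le_nhds
  have hεt : Tendsto (fun t : ℝ => b * (t:ℂ)) (𝓝[>] (0:ℝ)) (𝓝 0) := by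
    simpa using tendsto_const_nhds.mul ht0c
  have hγinv : Tendsto (fun t : ℝ => (γ t)⁻¹) (𝓝[>] (0:ℝ)) (𝓝 0) := by
    have hcb : Tendsto γ (𝓝[>] (0:ℝ)) (Bornology.cobounded ℂ) := by
      rw [← tendsto_norm_atTop_iff_cobounded]
      simpa using hγ
    exact tendsto_inv₀_cobounded.comp hcb
  -- U = b t γ t → 1
  have hU : Tendsto (fun t : ℝ => b * (t:ℂ) * γ t) (𝓝[>] (0:ℝ)) (𝓝 1) := by
    have hlim : Tendsto (fun t : ℝ => 1 + ((2 - a * (t:ℂ)) * (γ t)⁻¹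
        + (1 - 2*(b*(t:ℂ))) * ((γ t)⁻¹)^2)) (𝓝[>] (0:ℝ)) (𝓝 1) := by
      have hc : Continuous (fun p : ℂ × ℂ => 1 + ((2 - a * p.1) * p.2
          + (1 - 2*(b*p.1)) * p.2^2)) := by fun_prop
      have := (hc.tendsto (0, 0)).comp (ht0c.prodMk_nhds hγinv)
      norm_num at this
      exact this
    refine hlim.congr' ?_
    filter_upwards [hIoo, hγ0] with t ht hg
    obtain ⟨e1, e2, e3⟩ := hV t ht
    field_simp
    linear_combination (-(γ t)^2) * e1 + (γ t) * e2 - e3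
  -- σ = α + β → -2
  have hσ : Tendsto (fun t : ℝ => α t + β t) (𝓝[>] (0:ℝ)) (𝓝 (-2)) := by
    have hlim : Tendsto (fun t : ℝ => ((a*(t:ℂ)-2)*(b*(t:ℂ)*γ t) - b*(t:ℂ)*(1-2*(b*(t:ℂ))))
        / (b*(t:ℂ)*γ t)^2) (𝓝[>] (0:ℝ)) (𝓝 (-2)) := by
      have hnum : Tendsto (fun t : ℝ => (a*(t:ℂ)-2)*(b*(t:ℂ)*γ t) - b*(t:ℂ)*(1-2*(b*(t:ℂ))))
          (𝓝[>] (0:ℝ)) (𝓝 (-2)) := by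
        have hc : Continuous (fun p : ℂ × ℂ => (a*p.1-2)*p.2 - b*p.1*(1-2*(b*p.1))) := by
          fun_prop
        have := (hc.tendsto (0, 1)).comp (ht0c.prodMk_nhds hU)
        norm_num at this
        exact this
      have := hnum.div (hU.pow 2) (by norm_num)
      simpa [Pi.div_def] using this
    refine hlim.congr' ?_
    filter_upwards [hIoo, hU0] with t ht hu
    obtain ⟨e1, e2, e3⟩ := hV t ht
    rw [eq_comm, eq_div_iff (pow_ne_zero 2 hu)]
    linear_combination (b*(t:ℂ)*γ t) * e2 - (b*(t:ℂ)) * e3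
  -- π = α β → 1
  have hπ : Tendsto (fun t : ℝ => α t * β t) (𝓝[>] (0:ℝ)) (𝓝 1) := by
    have hlim : Tendsto (fun t : ℝ => (1 - 2*(b*(t:ℂ))) / (b*(t:ℂ)*γ t)) (𝓝[>] (0:ℝ)) (𝓝 1) := by
      have hnum : Tendsto (fun t : ℝ => 1 - 2*(b*(t:ℂ))) (𝓝[>] (0:ℝ)) (𝓝 1) := by
        have hc : Continuous (fun z : ℂ => 1 - 2*(b*z)) := by fun_prop
        have := (hc.tendsto 0).comp ht0c
        norm_num at this
        exact this
      have := hnum.div hU (by norm_num)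
      simpa [Pi.div_def] using this
    refine hlim.congr' ?_
    filter_upwards [hIoo, hU0] with t ht hu
    obtain ⟨e1, e2, e3⟩ := hV t ht
    rw [div_eq_iff hu, eq_comm]
    linear_combination e3
  -- (σ + 2)/(b t) → 3 + a/b
  have hN : Tendsto (fun t : ℝ => (α t + β t + 2)/(b*(t:ℂ))) (𝓝[>] (0:ℝ)) (𝓝 (3 + a/b)) := by
    have hlim : Tendsto (fun t : ℝ => (a*(t:ℂ)*γ t - 2*(b*(t:ℂ)*γ t)*(α t + β t)
        - (1 - 2*(b*(t:ℂ)))) / (b*(t:ℂ)*γ t)^2) (𝓝[>] (0:ℝ)) (𝓝 (3 + a/b)) := by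
      have hc : Continuous (fun p : ℂ × ℂ × ℂ =>
          (a/b)*p.1 - 2*p.1*p.2.1 - (1 - 2*(b*p.2.2))) := by fun_prop
      have hnum0 : Tendsto (fun t : ℝ => (a/b)*(b*(t:ℂ)*γ t)
          - 2*(b*(t:ℂ)*γ t)*(α t + β t) - (1 - 2*(b*(t:ℂ))))
          (𝓝[>] (0:ℝ)) (𝓝 (3 + a/b)) := by
        have h0 := (hc.tendsto (1, -2, 0)).comp
          (hU.prodMk_nhds (hσ.prodMk_nhds ht0c))
        have hval : (a/b)*(1:ℂ) - 2*1*(-2) - (1 - 2*(b*0)) = 3 + a/b := by ring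
        rw [hval] at h0
        exact h0
      have hnum : Tendsto (fun t : ℝ => a*(t:ℂ)*γ t - 2*(b*(t:ℂ)*γ t)*(α t + β t)
          - (1 - 2*(b*(t:ℂ)))) (𝓝[>] (0:ℝ)) (𝓝 (3 + a/b)) := by
        refine Tendsto.congr (fun t : ℝ => ?_) hnum0
        field_simp
      have := hnum.div (hU.pow 2) (by norm_num)
      simpa [Pi.div_def] using this
    refine hlim.congr' ?_
    filter_upwards [hIoo, hU0, hε0] with t ht hu he
    rw [eq_comm, div_eq_div_iff he (pow_ne_zero 2 hu)]
    obtain ⟨e1, e2, e3⟩ := hV t ht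
    linear_combination (2*(b*(t:ℂ))*γ t) * e1 + ((b*(t:ℂ))*γ t) * e2 - (b*(t:ℂ)) * e3
  -- (1 - π)/(b t) → 4
  have hD4 : Tendsto (fun t : ℝ => (1 - α t * β t)/(b*(t:ℂ))) (𝓝[>] (0:ℝ)) (𝓝 4) := by
    have hlim : Tendsto (fun t : ℝ => (2 - (α t + β t)) / (b*(t:ℂ)*γ t)) (𝓝[>] (0:ℝ)) (𝓝 4) := by
      have hnum : Tendsto (fun t : ℝ => 2 - (α t + β t)) (𝓝[>] (0:ℝ)) (𝓝 4) := by
        have hc : Continuous (fun z : ℂ => 2 - z) := by fun_prop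
        have := (hc.tendsto (-2)).comp hσ
        norm_num at this
        exact this
      have := hnum.div hU (by norm_num)
      simpa [Pi.div_def] using this
    refine hlim.congr' ?_
    filter_upwards [hIoo, hU0, hε0] with t ht hu he
    rw [eq_comm, div_eq_div_iff he hu]
    obtain ⟨e1, e2, e3⟩ := hV t ht
    linear_combination e1 - e3
  -- eventually 1 - α β ≠ 0
  have hd0 : ∀ᶠ t : ℝ in 𝓝[>] (0:ℝ), 1 - α t * β t ≠ 0 := by
    filter_upwards [hD4.eventually_ne (by norm_num : (4:ℂ) ≠ 0)] with t h1 h2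
    exact h1 (by rw [h2, zero_div])
  -- R = (σ+2)/(1-π) → (3 + a/b)/4
  have hR : Tendsto (fun t : ℝ => (α t + β t + 2)/(1 - α t * β t)) (𝓝[>] (0:ℝ))
      (𝓝 ((3 + a/b)/4)) := by
    have hlim := hN.div hD4 (by norm_num)
    refine hlim.congr' ?_
    filter_upwards [hε0] with t he
    exact div_div_same_aux _ _ _ he
  -- w = α + 1 → 0
  have hw : Tendsto (fun t : ℝ => α t + 1) (𝓝[>] (0:ℝ)) (𝓝 0) := by
    rw [tendsto_zero_iff_norm_tendsto_zero]
    have hA : Tendsto (fun t : ℝ => ‖α t + β t + 2‖) (𝓝[>] (0:ℝ)) (𝓝 0) := by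
      have h1 : Tendsto (fun t : ℝ => α t + β t + 2) (𝓝[>] (0:ℝ)) (𝓝 0) := by
        have hc : Continuous (fun z : ℂ => z + 2) := by fun_prop
        have := (hc.tendsto (-2)).comp hσ
        norm_num at this; exact this
      simpa using h1.norm
    have hB : Tendsto (fun t : ℝ => Real.sqrt ‖α t * β t + (α t + β t) + 1‖) (𝓝[>] (0:ℝ))
        (𝓝 0) := by
      have h1 : Tendsto (fun t : ℝ => α t * β t + (α t + β t) + 1) (𝓝[>] (0:ℝ)) (𝓝 0) := by
        have hc : Continuous (fun p : ℂ × ℂ => p.1 + p.2 + 1) := by fun_prop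
        have := (hc.tendsto (1, -2)).comp (hπ.prodMk_nhds hσ)
        norm_num at this; exact this
      have h2 : Tendsto (fun t : ℝ => ‖α t * β t + (α t + β t) + 1‖) (𝓝[>] (0:ℝ)) (𝓝 0) := by
        simpa using h1.norm
      have h3 := (Real.continuous_sqrt.tendsto 0).comp h2
      simpa [Function.comp_def] using h3
    have hg : Tendsto (fun t : ℝ => ‖α t + β t + 2‖
        + Real.sqrt ‖α t * β t + (α t + β t) + 1‖) (𝓝[>] (0:ℝ)) (𝓝 0) := by
      simpa using hA.add hB
    refine squeeze_zero' (Eventually.of_forall fun t => norm_nonneg _)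
      (Eventually.of_forall fun t => ?_) hg
    -- pointwise bound ‖α+1‖ ≤ ‖σ+2‖ + √‖π+σ+1‖
    set x := ‖α t + 1‖ with hxdef
    set A := ‖α t + β t + 2‖ with hAdef
    set B := ‖α t * β t + (α t + β t) + 1‖ with hBdef
    set s := Real.sqrt B with hsdef
    have hx0 : (0:ℝ) ≤ x := norm_nonneg _
    have hA0 : (0:ℝ) ≤ A := norm_nonneg _
    have hs0 : (0:ℝ) ≤ s := Real.sqrt_nonneg _
    have hss : s^2 = B := Real.sq_sqrt (norm_nonneg _)
    have h1 : x^2 ≤ A*x + s^2 := by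
      have hkey : (α t + 1)^2 = (α t + β t + 2)*(α t + 1)
          - (α t * β t + (α t + β t) + 1) := by ring
      calc x^2 = ‖(α t + 1)^2‖ := by rw [norm_pow]
        _ = ‖(α t + β t + 2)*(α t + 1) - (α t * β t + (α t + β t) + 1)‖ := by rw [hkey]
        _ ≤ ‖(α t + β t + 2)*(α t + 1)‖ + ‖α t * β t + (α t + β t) + 1‖ := norm_sub_le _ _
        _ = A*x + s^2 := by rw [norm_mul, hss]
    by_contra hcon
    push_neg at hcon
    have hx1 : (0:ℝ) < x := lt_of_le_of_lt (by positivity) hcon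
    have hsx : s ≤ x := le_trans (le_add_of_nonneg_left hA0) hcon.le
    nlinarith [mul_le_mul_of_nonneg_left hsx hs0, mul_lt_mul_of_pos_right hcon hx1]
  -- assemble the final limit
  have hΦ : Continuous (fun p : ℂ × ℂ × ℂ × ℂ =>
      p.1 * (p.2.1*((p.2.1-2)*p.2.2.2+2)) + (p.2.1^2 - 2*p.2.1 - 3 - p.2.2.1
        + (p.2.1+1)*(2-p.2.1)*p.2.2.2)) := by fun_prop
  have hcomb : Tendsto (fun t : ℝ => ((α t + 1), (α t + β t, (α t * β t,
      (α t + β t + 2)/(1 - α t * β t))))) (𝓝[>] (0:ℝ))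
      (𝓝 ((0:ℂ), ((-2:ℂ), ((1:ℂ), (3 + a/b)/4)))) :=
    hw.prodMk_nhds (hσ.prodMk_nhds (hπ.prodMk_nhds hR))
  have hT : Tendsto (fun t : ℝ => (α t + 1) * ((α t + β t)*(((α t + β t)-2)
      * ((α t + β t + 2)/(1 - α t * β t))+2)) + ((α t + β t)^2 - 2*(α t + β t) - 3
      - α t * β t + ((α t + β t)+1)*(2-(α t + β t))*((α t + β t + 2)/(1 - α t * β t))))
      (𝓝[>] (0:ℝ)) (𝓝 ((0:ℂ) * ((-2:ℂ)*(((-2:ℂ)-2)*((3 + a/b)/4)+2)) + ((-2:ℂ)^2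
        - 2*(-2:ℂ) - 3 - 1 + ((-2:ℂ)+1)*(2-(-2:ℂ))*((3 + a/b)/4)))) :=
    (hΦ.tendsto _).comp hcomb
  have hval : (0:ℂ) * ((-2:ℂ)*(((-2:ℂ)-2)*((3 + a/b)/4)+2)) + ((-2:ℂ)^2
      - 2*(-2:ℂ) - 3 - 1 + ((-2:ℂ)+1)*(2-(-2:ℂ))*((3 + a/b)/4)) = (b-a)/b := by
    field_simp
    ring
  rw [hval] at hT
  refine hT.congr' ?_
  filter_upwards [hd0] with t hd
  field_simp
  ring

end
end

section
/- With d, P, g, and f_a as in the context: (i) for every a ∈ ℂ, the degree-d² pair f_a is stable; (ii) there exist a, b ∈ ℂ such that f_a and f_b are not conjugate (so a ↦ [f_a] ∈ Mbar_{d²} is non-constant). -/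
noncomputable section

open MvPolynomial

/-- Polynomials in the two variables `z = X 0` and `w = X 1` over `ℂ`. -/
abbrev MvPoly2 : Type := MvPolynomial (Fin 2) ℂ

/-- A pair of polynomials, representing a point of `Ratbar_d` when both entries are
homogeneous of degree `d` and not both zero. -/
abbrev Pair : Type := MvPoly2 × MvPoly2

/-- `f` is a degree-`d` pair: both entries homogeneous of degree `d`, not both zero. -/
def IsDegPair (d : ℕ) (f : Pair) : Prop :=
  f.1.IsHomogeneous d ∧ f.2.IsHomogeneous d ∧ f ≠ 0

/-- Composition of pairs: substitute the components of `g` into `f`. -/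
def comp (f g : Pair) : Pair :=
  (aeval ![g.1, g.2] f.1, aeval ![g.1, g.2] f.2)

/-- The identity pair `(z, w)`. -/
def idPair : Pair := (X 0, X 1)

/-- Iterates: `iter f n = f^n`, the `n`-fold self-composition, with `f^0` the identity. -/
def iter (f : Pair) : ℕ → Pair
  | 0 => idPair
  | n + 1 => comp f (iter f n)

/-- The linear form `β z - α w` vanishing at the point `(α : β)` of `ℙ¹`. -/
def linForm (v : ℂ × ℂ) : MvPoly2 := C v.2 * X 0 - C v.1 * X 1

/-- Order of vanishing of the linear form of `v` in a polynomial `P`. -/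
def ord (v : ℂ × ℂ) (P : MvPoly2) : ℕ := sSup {n : ℕ | linForm v ^ n ∣ P}

/-- Depth of `v` as a hole of `f`: the multiplicity of `linForm v` in `gcd (f.1, f.2)`. -/
def depth (v : ℂ × ℂ) (f : Pair) : ℕ :=
  sSup {n : ℕ | linForm v ^ n ∣ f.1 ∧ linForm v ^ n ∣ f.2}

/-- The homogeneous form `z Q - w P`, whose vanishing at `v` beyond the depth of the
hole detects that the reduced map fixes `v`. -/
def fixedForm (f : Pair) : MvPoly2 := X 0 * f.2 - X 1 * f.1

/-- `φ_f(v) = v` in the sense of the paper: the multiplicity of `v` as a root of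
`z Q - w P` strictly exceeds the depth of `v` as a hole of `f`. -/
def FixedHole (v : ℂ × ℂ) (f : Pair) : Prop := depth v f < ord v (fixedForm f)

/-- Stability with cutoff `m`: all holes have depth at most `m` and no hole of depth
exactly `m` is fixed by the reduced map. -/
def StableAt (m : ℕ) (f : Pair) : Prop :=
  f ≠ 0 ∧ ∀ v : ℂ × ℂ, v ≠ 0 →
    depth v f ≤ m ∧ (0 < depth v f → depth v f = m → ¬ FixedHole v f)

/-- GIT stability of a degree-`d` pair. -/
def Stable (d : ℕ) (f : Pair) : Prop :=
  if d % 2 = 0 then StableAt (d / 2) f else StableAt ((d - 1) / 2) f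

/-- GIT semistability of a degree-`d` pair. -/
def Semistable (d : ℕ) (f : Pair) : Prop :=
  if d % 2 = 0 then StableAt (d / 2) f else StableAt ((d + 1) / 2) f

/-- The indeterminacy locus: `f ∈ I(d)` iff `f ∘ f` is the zero pair. -/
def IsIndet (f : Pair) : Prop := comp f f = 0

/-- The degree-1 pair `(az + bw, cz + dw)` associated to a `2 × 2` matrix. -/
def matPair (A : Matrix (Fin 2) (Fin 2) ℂ) : Pair :=
  (C (A 0 0) * X 0 + C (A 0 1) * X 1, C (A 1 0) * X 0 + C (A 1 1) * X 1)

/-- Conjugacy of pairs: `g` is a nonzero scalar multiple of `A ∘ f ∘ A⁻¹` for some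
`A ∈ GL₂(ℂ)`. -/
def Conjugate (f g : Pair) : Prop :=
  ∃ A : Matrix.GeneralLinearGroup (Fin 2) ℂ, ∃ c : ℂ, c ≠ 0 ∧
    g = c • comp (matPair (A : Matrix (Fin 2) (Fin 2) ℂ))
        (comp f (matPair ((A⁻¹ : Matrix.GeneralLinearGroup (Fin 2) ℂ) : Matrix (Fin 2) (Fin 2) ℂ)))

/-- The pair `g = (w P, 0)` of degree `d`. -/
def gP (P : MvPoly2) : Pair := (X 1 * P, 0)

/-- The pair `f_a = (w^{d-1} P^{d-1} (a w P + z^d), w^d P^d)` of degree `d²`,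
the limit of the second iterates of the family `g_{a,t}`. -/
def fa (d : ℕ) (P : MvPoly2) (a : ℂ) : Pair :=
  (X 1 ^ (d - 1) * P ^ (d - 1) * (C a * X 1 * P + X 0 ^ d), X 1 ^ d * P ^ d)

namespace Aux


lemma fin2ext {m m' : Fin 2 →₀ ℕ} (h0 : m 0 = m' 0) (h1 : m 1 = m' 1) : m = m' := by
  apply Finsupp.ext; intro i; fin_cases i <;> assumption

lemma deg2 (m : Fin 2 →₀ ℕ) : m.degree = m 0 + m 1 := by
  rw [Finsupp.degree_apply, Finset.sum_subset (Finset.subset_univ _)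
    (fun i _ hi => Finsupp.notMem_support_iff.mp hi), Fin.sum_univ_two]

lemma monomial_eq2 (m : Fin 2 →₀ ℕ) (c : ℂ) : monomial m c = C c * X 0 ^ (m 0) * X 1 ^ (m 1) := by
  rw [monomial_eq, Finsupp.prod_fintype _ _ (fun i => pow_zero _), Fin.prod_univ_two, mul_assoc]

lemma isHom_mk {p : MvPoly2} {n : ℕ} (h : ∀ m : Fin 2 →₀ ℕ, coeff m p ≠ 0 → m 0 + m 1 = n) :
    p.IsHomogeneous n := by
  intro m hm
  rw [show (Finsupp.weight 1 : (Fin 2 →₀ ℕ) →+ ℕ) = Finsupp.degree from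
    Finsupp.degree_eq_weight_one.symm, deg2]
  exact h m hm

lemma isHom_use {p : MvPoly2} {n : ℕ} (h : p.IsHomogeneous n) {m : Fin 2 →₀ ℕ}
    (hm : coeff m p ≠ 0) : m 0 + m 1 = n := by
  rw [← deg2, Finsupp.degree_eq_weight_one]
  exact h hm

-- prime power division lemma
lemma le_of_pow_dvd_pow_mul {p r : MvPoly2} (hp : Prime p) (hr : ¬ p ∣ r) {n k : ℕ}
    (h : p ^ n ∣ p ^ k * r) : n ≤ k := by
  by_contra hlt
  push_neg at hlt
  obtain ⟨t, ht⟩ := dvd_trans (pow_dvd_pow p hlt) h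
  rw [pow_succ, mul_assoc] at ht
  exact hr ⟨t, mul_left_cancel₀ (pow_ne_zero k hp.ne_zero) ht⟩

lemma negpow_dvd_iff (x y : MvPoly2) (k : ℕ) : (-x) ^ k ∣ y ↔ x ^ k ∣ y := by
  rcases Nat.even_or_odd k with h | h
  · rw [h.neg_pow]
  · rw [h.neg_pow, neg_dvd]


-- the substitution z ↦ X, w ↦ 1
def theta : MvPoly2 →ₐ[ℂ] Polynomial ℂ := aeval ![Polynomial.X, 1]

lemma theta_apply (p : MvPoly2) :
    theta p = ∑ m ∈ p.support, Polynomial.C (coeff m p) * Polynomial.X ^ (m 0) := by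
  conv_lhs => rw [← p.support_sum_monomial_coeff]
  rw [map_sum]
  apply Finset.sum_congr rfl
  intro m _
  rw [monomial_eq2, map_mul, map_mul, map_pow, map_pow]
  simp [theta]

lemma theta_coeff {p : MvPoly2} {n : ℕ} (hp : p.IsHomogeneous n) (m : Fin 2 →₀ ℕ)
    (hm : m 0 + m 1 = n) : (theta p).coeff (m 0) = coeff m p := by
  rw [theta_apply, Polynomial.finset_sum_coeff]
  simp only [Polynomial.coeff_C_mul, Polynomial.coeff_X_pow]
  rw [Finset.sum_eq_single m]
  · simp
  · intro m' hm' hne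
    have hd := isHom_use hp (mem_support_iff.mp hm')
    rcases eq_or_ne (m 0) (m' 0) with hc | hc
    · exact absurd (fin2ext hc.symm (by omega)) hne
    · simp [hc]
  · intro hm'
    simp [notMem_support_iff.mp hm']

lemma theta_ne_zero {p : MvPoly2} {n : ℕ} (hp : p.IsHomogeneous n) (h0 : p ≠ 0) :
    theta p ≠ 0 := by
  obtain ⟨m, hm⟩ := Finset.nonempty_iff_ne_empty.mpr (fun h => h0 (support_eq_empty.mp h))
  have hd := isHom_use hp (mem_support_iff.mp hm)
  intro h
  have := theta_coeff hp m hd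
  rw [h] at this
  exact mem_support_iff.mp hm this.symm

lemma theta_natDegree_le {p : MvPoly2} {n : ℕ} (hp : p.IsHomogeneous n) :
    (theta p).natDegree ≤ n := by
  rw [theta_apply]
  apply Polynomial.natDegree_sum_le_of_forall_le
  intro m hm
  refine le_trans (Polynomial.natDegree_C_mul_le _ _) ?_
  rw [Polynomial.natDegree_X_pow]
  have := isHom_use hp (mem_support_iff.mp hm)
  omega

-- the swap substitution
def swapHom : MvPoly2 →ₐ[ℂ] MvPoly2 := rename (Equiv.swap (0 : Fin 2) 1)

lemma swapHom_swapHom (p : MvPoly2) : swapHom (swapHom p) = p := by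
  show rename _ (rename _ p) = p
  rw [rename_rename]
  have : (⇑(Equiv.swap (0 : Fin 2) 1) ∘ ⇑(Equiv.swap (0 : Fin 2) 1)) = id := by
    funext i
    simp
  rw [this, rename_id, AlgHom.id_apply]

lemma swapHom_isHom {p : MvPoly2} {n : ℕ} (hp : p.IsHomogeneous n) :
    (swapHom p).IsHomogeneous n := hp.rename_isHomogeneous

lemma swapHom_linForm (v : ℂ × ℂ) : swapHom (linForm v) = - linForm (v.2, v.1) := by
  simp only [linForm, swapHom, map_sub, map_mul, rename_C, rename_X]
  simp only [Equiv.swap_apply_left, Equiv.swap_apply_right]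
  ring

-- the degree bound
lemma le_of_linForm_pow_dvd {q : MvPoly2} {n k : ℕ} {v : ℂ × ℂ} (hq : q.IsHomogeneous n)
    (h0 : q ≠ 0) (hv : v ≠ 0) (hdvd : linForm v ^ k ∣ q) : k ≤ n := by
  -- first the case v.2 ≠ 0
  have key : ∀ (q' : MvPoly2) (v' : ℂ × ℂ), q'.IsHomogeneous n → q' ≠ 0 → v'.2 ≠ 0 →
      linForm v' ^ k ∣ q' → k ≤ n := by
    intro q' v' hq' h0' hv2 hdvd'
    have hθ : (theta (linForm v')) = Polynomial.C v'.2 *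
        (Polynomial.X + Polynomial.C (-(v'.1) / v'.2)) := by
      simp only [linForm, theta, map_sub, map_mul, aeval_C, aeval_X]
      simp only [Matrix.cons_val_zero, Matrix.cons_val_one, Matrix.head_cons,
        Polynomial.algebraMap_eq]
      rw [mul_add, ← Polynomial.C_mul]
      have hx : v'.2 * (-(v'.1) / v'.2) = -v'.1 := by field_simp
      rw [hx, map_neg]
      ring
    have hdvd2 : (Polynomial.X + Polynomial.C (-(v'.1) / v'.2)) ^ k ∣ theta q' := by
      have h1 : (theta (linForm v')) ^ k ∣ theta q' := by
        rw [← map_pow]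
        exact map_dvd _ hdvd'
      rw [hθ, mul_pow] at h1
      exact dvd_trans (Dvd.intro_left _ rfl) h1
    have := Polynomial.natDegree_le_of_dvd hdvd2 (theta_ne_zero hq' h0')
    rw [Polynomial.natDegree_pow_X_add_C] at this
    exact le_trans this (theta_natDegree_le hq')
  rcases eq_or_ne v.2 0 with h2 | h2
  · -- swap
    have hv1 : v.1 ≠ 0 := by
      intro h1; exact hv (Prod.ext h1 h2)
    apply key (swapHom q) (v.2, v.1) (swapHom_isHom hq)
      (fun h => h0 (by rw [← swapHom_swapHom q, h, map_zero])) hv1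
    have : swapHom (linForm v ^ k) ∣ swapHom q := map_dvd _ hdvd
    rw [map_pow, swapHom_linForm] at this
    exact (negpow_dvd_iff _ _ _).mp this
  · exact key q v hq h0 h2 hdvd



def linAlgHom (a b c d : ℂ) : MvPoly2 →ₐ[ℂ] MvPoly2 :=
  aeval ![C a * X 0 + C b * X 1, C c * X 0 + C d * X 1]

lemma linAlgHom_X0 (a b c d : ℂ) : linAlgHom a b c d (X 0) = C a * X 0 + C b * X 1 := by
  simp [linAlgHom]

lemma linAlgHom_X1 (a b c d : ℂ) : linAlgHom a b c d (X 1) = C c * X 0 + C d * X 1 := by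
  simp [linAlgHom]

lemma linAlgHom_comp (a b c d a' b' c' d' : ℂ)
    (h1 : a * a' + b * c' = 1) (h2 : a * b' + b * d' = 0)
    (h3 : c * a' + d * c' = 0) (h4 : c * b' + d * d' = 1) :
    (linAlgHom a' b' c' d').comp (linAlgHom a b c d) = AlgHom.id ℂ MvPoly2 := by
  apply MvPolynomial.algHom_ext
  have h1' : C a * C a' + C b * C c' = (1 : MvPoly2) := by
    rw [← map_mul, ← map_mul, ← map_add, h1, map_one]
  have h2' : C a * C b' + C b * C d' = (0 : MvPoly2) := by
    rw [← map_mul, ← map_mul, ← map_add, h2, map_zero]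
  have h3' : C c * C a' + C d * C c' = (0 : MvPoly2) := by
    rw [← map_mul, ← map_mul, ← map_add, h3, map_zero]
  have h4' : C c * C b' + C d * C d' = (1 : MvPoly2) := by
    rw [← map_mul, ← map_mul, ← map_add, h4, map_one]
  rw [Fin.forall_fin_two]
  constructor <;>
    simp only [AlgHom.comp_apply, AlgHom.id_apply, linAlgHom, map_add, map_mul, aeval_X, aeval_C,
      algebraMap_eq, Matrix.cons_val_zero, Matrix.cons_val_one, Matrix.head_cons]
  · linear_combination (X 0 : MvPoly2) * h1' + (X 1 : MvPoly2) * h2'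
  · linear_combination (X 0 : MvPoly2) * h3' + (X 1 : MvPoly2) * h4'

def linEquiv (a b c d Δ : ℂ) (hd : a * d - b * c = Δ) (hΔ : Δ ≠ 0) : MvPoly2 ≃ₐ[ℂ] MvPoly2 :=
  AlgEquiv.ofAlgHom (linAlgHom a b c d) (linAlgHom (d/Δ) (-b/Δ) (-c/Δ) (a/Δ))
    (by
      apply linAlgHom_comp
      · linear_combination Δ⁻¹ * hd + mul_inv_cancel₀ hΔ
      · ring
      · ring
      · linear_combination Δ⁻¹ * hd + mul_inv_cancel₀ hΔ)
    (by
      apply linAlgHom_comp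
      · linear_combination Δ⁻¹ * hd + mul_inv_cancel₀ hΔ
      · ring
      · ring
      · linear_combination Δ⁻¹ * hd + mul_inv_cancel₀ hΔ)

lemma prime_X0 : Prime (X 0 : MvPoly2) := by
  rw [← MulEquiv.prime_iff (finSuccEquiv ℂ 1).toMulEquiv]
  have : (finSuccEquiv ℂ 1).toMulEquiv (X 0 : MvPoly2) = Polynomial.X := finSuccEquiv_X_zero
  rw [this]
  exact Polynomial.prime_X

lemma prime_linForm {v : ℂ × ℂ} (hv : v ≠ 0) : Prime (linForm v) := by
  have hΔ : v.2 * (starRingEnd ℂ v.2) - (-v.1) * (starRingEnd ℂ v.1) ≠ 0 := by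
    simp only [neg_mul, sub_neg_eq_add, Complex.mul_conj]
    intro h
    apply hv
    have h1 : Complex.normSq v.2 + Complex.normSq v.1 = 0 := by exact_mod_cast h
    have := Complex.normSq_nonneg v.1
    have := Complex.normSq_nonneg v.2
    have hv1 : Complex.normSq v.1 = 0 := by linarith
    have hv2 : Complex.normSq v.2 = 0 := by linarith
    exact Prod.ext (Complex.normSq_eq_zero.mp hv1) (Complex.normSq_eq_zero.mp hv2)
  set e := linEquiv v.2 (-v.1) (starRingEnd ℂ v.1) (starRingEnd ℂ v.2) _ rfl hΔ with he
  have hX : e (X 0) = linForm v := by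
    have h0 : e (X 0) = linAlgHom v.2 (-v.1) (starRingEnd ℂ v.1) (starRingEnd ℂ v.2) (X 0) := rfl
    rw [h0, linAlgHom_X0, linForm, map_neg]
    ring
  rw [← hX]
  exact (MulEquiv.prime_iff e.toRingEquiv.toMulEquiv).mpr prime_X0

lemma prime_X1 : Prime (X 1 : MvPoly2) := by
  have h := prime_linForm (v := (-1, 0)) (by simp [Prod.ext_iff])
  have : linForm (-1, 0) = (X 1 : MvPoly2) := by simp [linForm]
  rwa [this] at h


end Aux
namespace Aux

section Stability
variable {d : ℕ} {P : MvPoly2}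

lemma hP0 (hmonic : coeff (Finsupp.single 0 (d - 1)) P = 1) : P ≠ 0 := by
  intro h
  rw [h, coeff_zero] at hmonic
  exact zero_ne_one hmonic

lemma hX1P (hmonic : coeff (Finsupp.single 0 (d - 1)) P = 1) : ¬ (X 1 : MvPoly2) ∣ P := by
  rintro ⟨q, hq⟩
  rw [hq, coeff_X_mul'] at hmonic
  simp [Finsupp.single_apply] at hmonic

lemma hX0P (hP01 : eval ![0, 1] P ≠ 0) : ¬ (X 0 : MvPoly2) ∣ P := by
  rintro ⟨q, hq⟩
  apply hP01
  rw [hq, eval_mul]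
  simp

lemma hX1X0 : ¬ (X 1 : MvPoly2) ∣ X 0 := by
  rintro ⟨q, hq⟩
  have := congrArg (eval ![1, 0]) hq
  rw [eval_mul] at this
  simp at this

lemma hX0X1 : ¬ (X 0 : MvPoly2) ∣ X 1 := by
  rintro ⟨q, hq⟩
  have := congrArg (eval ![0, 1]) hq
  rw [eval_mul] at this
  simp at this

lemma depth_bound (hmonic : coeff (Finsupp.single 0 (d - 1)) P = 1)
    (hdistinct : ∀ v : ℂ × ℂ, v ≠ 0 → ¬ linForm v ^ 2 ∣ P)
    (hP01 : eval ![0, 1] P ≠ 0)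
    (a : ℂ) (v : ℂ × ℂ) (hv : v ≠ 0) {n : ℕ}
    (h1 : linForm v ^ n ∣ X 1 ^ (d - 1) * P ^ (d - 1) * (C a * X 1 * P + X 0 ^ d))
    (h2 : linForm v ^ n ∣ X 1 ^ d * P ^ d) : n ≤ d - 1 := by
  set L := linForm v with hLdef
  have hL : Prime L := prime_linForm hv
  set Q := C a * X 1 * P + X 0 ^ d with hQdef
  by_cases hw : L ∣ X 1
  · have hassoc : Associated L (X 1) := hL.associated_of_dvd prime_X1 hw
    have hLP : ¬ L ∣ P := fun h => hX1P hmonic (hassoc.dvd_iff_dvd_left.mp h)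
    have hLX0 : ¬ L ∣ X 0 := fun h => hX1X0 (hassoc.dvd_iff_dvd_left.mp h)
    have hLQ : ¬ L ∣ Q := by
      intro h
      have hq1 : L ∣ C a * X 1 * P := ((hw.mul_left (C a)).mul_right P)
      exact hLX0 (hL.dvd_of_dvd_pow ((dvd_add_right hq1).mp h))
    obtain ⟨u, hu⟩ := hassoc
    apply le_of_pow_dvd_pow_mul hL (r := (u : MvPoly2) ^ (d - 1) * (P ^ (d - 1) * Q))
    · intro hdvd
      rcases hL.dvd_mul.mp hdvd with h | h
      · exact hL.not_unit (isUnit_of_dvd_unit h (u.isUnit.pow _))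
      rcases hL.dvd_mul.mp h with h | h
      · exact hLP (hL.dvd_of_dvd_pow h)
      · exact hLQ h
    · have he : X 1 ^ (d - 1) * P ^ (d - 1) * Q
          = L ^ (d - 1) * ((u : MvPoly2) ^ (d - 1) * (P ^ (d - 1) * Q)) := by
        rw [← hu]; ring
      rwa [he] at h1
  · by_cases hp : L ∣ P
    · obtain ⟨s, hs⟩ := hp
      have hLs : ¬ L ∣ s := by
        rintro ⟨t, ht⟩
        exact hdistinct v hv ⟨t, by rw [hs, ht]; ring⟩
      have hLX0 : ¬ L ∣ X 0 := by
        intro h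
        exact hX0P hP01 (((hL.associated_of_dvd prime_X0 h).dvd_iff_dvd_left).mp ⟨s, hs⟩)
      have hLQ : ¬ L ∣ Q := by
        intro h
        have hq1 : L ∣ C a * X 1 * P := Dvd.dvd.mul_left ⟨s, hs⟩ (C a * X 1)
        exact hLX0 (hL.dvd_of_dvd_pow ((dvd_add_right hq1).mp h))
      apply le_of_pow_dvd_pow_mul hL (r := s ^ (d - 1) * (X 1 ^ (d - 1) * Q))
      · intro hdvd
        rcases hL.dvd_mul.mp hdvd with h | h
        · exact hLs (hL.dvd_of_dvd_pow h)
        rcases hL.dvd_mul.mp h with h | h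
        · exact hw (hL.dvd_of_dvd_pow h)
        · exact hLQ h
      · have he : X 1 ^ (d - 1) * P ^ (d - 1) * Q
            = L ^ (d - 1) * (s ^ (d - 1) * (X 1 ^ (d - 1) * Q)) := by
          rw [hs]; ring
        rwa [he] at h1
    · have hn0 : n ≤ 0 := by
        apply le_of_pow_dvd_pow_mul hL (k := 0) (r := X 1 ^ d * P ^ d)
        · rw [pow_zero, one_mul]
          exact h2
        · intro hdvd
          rcases hL.dvd_mul.mp hdvd with h | h
          · exact hw (hL.dvd_of_dvd_pow h)
          · exact hp (hL.dvd_of_dvd_pow h)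
      omega

lemma depth_fa_le (hmonic : coeff (Finsupp.single 0 (d - 1)) P = 1)
    (hdistinct : ∀ v : ℂ × ℂ, v ≠ 0 → ¬ linForm v ^ 2 ∣ P)
    (hP01 : eval ![0, 1] P ≠ 0) (a : ℂ) (v : ℂ × ℂ) (hv : v ≠ 0) :
    depth v (fa d P a) ≤ d - 1 := by
  apply csSup_le ⟨0, by simp⟩
  rintro n ⟨hn1, hn2⟩
  exact depth_bound hmonic hdistinct hP01 a v hv hn1 hn2

theorem part_one (hd : 2 ≤ d) (hmonic : coeff (Finsupp.single 0 (d - 1)) P = 1)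
    (hdistinct : ∀ v : ℂ × ℂ, v ≠ 0 → ¬ linForm v ^ 2 ∣ P)
    (hP01 : eval ![0, 1] P ≠ 0) (a : ℂ) : Stable (d ^ 2) (fa d P a) := by
  have hfa2 : (fa d P a).2 ≠ 0 := by
    show X 1 ^ d * P ^ d ≠ 0
    exact mul_ne_zero (pow_ne_zero _ (X_ne_zero _)) (pow_ne_zero _ (hP0 hmonic))
  have hfane : fa d P a ≠ 0 := fun h => hfa2 (by rw [h]; rfl)
  have key : ∀ m : ℕ, d - 1 < m → StableAt m (fa d P a) := by
    intro m hm
    refine ⟨hfane, fun v hv => ?_⟩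
    have hd1 := depth_fa_le hmonic hdistinct hP01 a v hv
    exact ⟨by omega, fun hpos heq => absurd (heq ▸ hd1) (by omega)⟩
  have hdd : d ^ 2 = d * d := sq d
  rw [Stable]
  split_ifs with hpar
  · apply key
    have h2 : 2 * d ≤ d * d := Nat.mul_le_mul hd (le_refl d)
    omega
  · apply key
    have hodd : d % 2 = 1 := by
      rcases Nat.even_or_odd d with he | ho
      · exfalso
        apply hpar
        obtain ⟨k, hk⟩ := he
        have h4 : d * d = 2 * (2 * k * k) := by rw [hk]; ring
        omega
      · obtain ⟨k, hk⟩ := ho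
        omega
    have h3 : 3 ≤ d := by omega
    have h2 : 3 * d ≤ d * d := Nat.mul_le_mul h3 (le_refl d)
    omega

end Stability
end Aux
namespace Aux
section PartTwo
variable {d : ℕ} {P : MvPoly2}

/-- the quotient `P₁` with `X 1 * P₁ = P - X 0 ^ (d-1)`. -/
def P1 (d : ℕ) (P : MvPoly2) : MvPoly2 :=
  MvPolynomial.divMonomial (P - X 0 ^ (d - 1)) (Finsupp.single 1 1)

lemma single_add_sub (m : Fin 2 →₀ ℕ) (hm : m 1 ≠ 0) :
    Finsupp.single 1 1 + (m - Finsupp.single 1 1) = m := by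
  apply fin2ext <;>
      simp only [Finsupp.add_apply, Finsupp.tsub_apply, Finsupp.single_apply] <;>
    simp <;> omega

lemma P1_eq (hd : 2 ≤ d) (hP : P.IsHomogeneous (d - 1))
    (hmonic : coeff (Finsupp.single 0 (d - 1)) P = 1) :
    X 1 * P1 d P = P - X 0 ^ (d - 1) := by
  ext m
  rw [coeff_X_mul']
  split_ifs with hm
  · rw [P1, coeff_divMonomial, single_add_sub m (Finsupp.mem_support_iff.mp hm)]
  · have hm1 : m 1 = 0 := Finsupp.notMem_support_iff.mp hm
    rw [coeff_sub, coeff_X_pow]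
    rcases eq_or_ne (m 0) (d - 1) with he | he
    · have hmeq : m = Finsupp.single 0 (d - 1) := by
        apply fin2ext <;> simp [Finsupp.single_apply, he, hm1]
      rw [if_pos hmeq.symm, hmeq, hmonic]
      ring
    · rw [if_neg (fun hc => he (by rw [← hc]; simp))]
      have : coeff m P = 0 := by
        by_contra hc
        have := isHom_use hP hc
        omega
      rw [this]
      ring

lemma P1_isHom (hd : 2 ≤ d) (hP : P.IsHomogeneous (d - 1)) :
    (P1 d P).IsHomogeneous (d - 2) := by
  apply isHom_mk
  intro m hm
  rw [P1, coeff_divMonomial, coeff_sub] at hm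
  have hx0 : coeff (Finsupp.single 1 1 + m) (X 0 ^ (d - 1) : MvPoly2) = 0 := by
    rw [coeff_X_pow, if_neg]
    intro hc
    have := DFunLike.congr_fun hc 1
    simp [Finsupp.single_apply] at this
    omega
  rw [hx0, sub_zero] at hm
  have := isHom_use hP hm
  simp only [Finsupp.add_apply, Finsupp.single_apply] at this
  simp at this
  omega

/-- the distinguished coefficient -/
def c1 (d : ℕ) (P : MvPoly2) : ℂ :=
  coeff (Finsupp.single 1 1 + Finsupp.single 0 (d - 2)) P

lemma coeff_X0_P1 (hd : 2 ≤ d) (hmonic : coeff (Finsupp.single 0 (d - 1)) P = 1) :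
    coeff (Finsupp.single 0 (d - 1)) (X 0 * P1 d P) = c1 d P := by
  rw [show d - 1 = 1 + (d - 2) by omega, Finsupp.single_add, coeff_X_mul]
  rw [P1, coeff_divMonomial, coeff_sub, coeff_X_pow, if_neg, sub_zero, c1]
  intro hc
  have := DFunLike.congr_fun hc 1
  simp [Finsupp.single_apply] at this

lemma coeff_T (hd : 2 ≤ d) (hmonic : coeff (Finsupp.single 0 (d - 1)) P = 1) (b : ℂ) :
    coeff (Finsupp.single 0 (d - 1)) (X 0 * P1 d P - C b * P) = c1 d P - b := by
  rw [coeff_sub, coeff_X0_P1 hd hmonic, coeff_C_mul, hmonic, mul_one]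

lemma X1_dvd_of_coeff {x : MvPoly2} (h : ∀ m : Fin 2 →₀ ℕ, m 1 = 0 → coeff m x = 0) :
    (X 1 : MvPoly2) ∣ x := by
  refine ⟨MvPolynomial.divMonomial x (Finsupp.single 1 1), ?_⟩
  ext m
  rw [coeff_X_mul']
  split_ifs with hm
  · rw [coeff_divMonomial, single_add_sub m (Finsupp.mem_support_iff.mp hm)]
  · exact h m (Finsupp.notMem_support_iff.mp hm)

lemma X1_dvd_T (hd : 2 ≤ d) (hP : P.IsHomogeneous (d - 1))
    (hmonic : coeff (Finsupp.single 0 (d - 1)) P = 1) :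
    (X 1 : MvPoly2) ∣ (X 0 * P1 d P - C (c1 d P) * P) := by
  apply X1_dvd_of_coeff
  intro m hm1
  have hmeq : m = Finsupp.single 0 (m 0) := by
    apply fin2ext <;> simp [Finsupp.single_apply, hm1]
  rw [coeff_sub, coeff_C_mul]
  rcases Nat.eq_zero_or_pos (m 0) with h0 | h0
  · have hm0 : m = 0 := by
      rw [hmeq, h0, Finsupp.single_zero]
    have hc1 : coeff m (X 0 * P1 d P) = 0 := by
      rw [hm0, coeff_X_mul', if_neg]
      simp
    have hc2 : coeff m P = 0 := by
      by_contra hc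
      have := isHom_use hP hc
      omega
    rw [hc1, hc2]
    ring
  · obtain ⟨j, hj⟩ : ∃ j, m 0 = 1 + j := ⟨m 0 - 1, by omega⟩
    rw [hmeq, hj, Finsupp.single_add, coeff_X_mul]
    rw [P1, coeff_divMonomial, coeff_sub, coeff_X_pow, if_neg ?hne, sub_zero]
    case hne =>
      intro hc
      have := DFunLike.congr_fun hc 1
      simp [Finsupp.single_apply] at this
    rcases eq_or_ne j (d - 2) with hje | hje
    · rw [hje]
      have hPm : coeff (Finsupp.single 0 1 + Finsupp.single 0 (d - 2)) P = 1 := by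
        rw [← Finsupp.single_add, show 1 + (d - 2) = d - 1 by omega]
        exact hmonic
      rw [hPm, mul_one, ← c1]
      ring
    · have hz1 : coeff (Finsupp.single 1 1 + Finsupp.single 0 j) P = 0 := by
        by_contra hc
        have := isHom_use hP hc
        simp only [Finsupp.add_apply, Finsupp.single_apply] at this
        simp at this
        omega
      have hz2 : coeff (Finsupp.single 0 1 + Finsupp.single 0 j) P = 0 := by
        rw [← Finsupp.single_add]
        by_contra hc
        have := isHom_use hP hc
        simp [Finsupp.single_apply] at this
        omega
      rw [hz1, hz2]
      ring

lemma fixedForm_fa (hd : 2 ≤ d) (hP : P.IsHomogeneous (d - 1))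
    (hmonic : coeff (Finsupp.single 0 (d - 1)) P = 1) (a : ℂ) :
    fixedForm (fa d P a) = X 1 ^ (d + 1) * P ^ (d - 1) * (X 0 * P1 d P - C a * P) := by
  have hP1 := P1_eq hd hP hmonic
  obtain ⟨e, rfl⟩ : ∃ e, d = e + 1 := ⟨d - 1, by omega⟩
  simp only [Nat.add_sub_cancel] at hP1 ⊢
  show X 0 * (X 1 ^ (e + 1) * P ^ (e + 1))
      - X 1 * (X 1 ^ e * P ^ e * (C a * X 1 * P + X 0 ^ (e + 1))) = _
  linear_combination (-(X 1 ^ (e + 1) * P ^ e * X 0)) * hP1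

end PartTwo
end Aux
namespace Aux
section PartTwo2
variable {d : ℕ} {P : MvPoly2}

lemma bad_c1 (hd : 2 ≤ d) (hP : P.IsHomogeneous (d - 1))
    (hmonic : coeff (Finsupp.single 0 (d - 1)) P = 1) :
    linForm (1, 0) ^ (d + 2) ∣ fixedForm (fa d P (c1 d P)) := by
  have hl : linForm (1, 0) = -(X 1 : MvPoly2) := by
    simp [linForm]
  rw [hl, negpow_dvd_iff, fixedForm_fa hd hP hmonic]
  obtain ⟨T', hT'⟩ := X1_dvd_T hd hP hmonic
  refine ⟨P ^ (d - 1) * T', ?_⟩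
  rw [hT']
  ring

lemma T_ne (hd : 2 ≤ d) (hmonic : coeff (Finsupp.single 0 (d - 1)) P = 1) :
    coeff (Finsupp.single 0 (d - 1)) (X 0 * P1 d P - C (c1 d P + 1) * P) = -1 := by
  rw [coeff_T hd hmonic]
  ring

lemma notbad (hd : 2 ≤ d) (hP : P.IsHomogeneous (d - 1))
    (hmonic : coeff (Finsupp.single 0 (d - 1)) P = 1)
    (hdistinct : ∀ v : ℂ × ℂ, v ≠ 0 → ¬ linForm v ^ 2 ∣ P)
    (hP01 : eval ![0, 1] P ≠ 0)
    (v : ℂ × ℂ) (hv : v ≠ 0) :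
    ¬ linForm v ^ (d + 2) ∣ fixedForm (fa d P (c1 d P + 1)) := by
  intro hdvd
  rw [fixedForm_fa hd hP hmonic] at hdvd
  set T := X 0 * P1 d P - C (c1 d P + 1) * P with hTdef
  have hT0 : T ≠ 0 := fun h => by
    have := T_ne hd hmonic (P := P)
    rw [← hTdef, h, coeff_zero] at this
    norm_num at this
  have hX1T : ¬ (X 1 : MvPoly2) ∣ T := by
    rintro ⟨q, hq⟩
    have := T_ne hd hmonic (P := P)
    rw [← hTdef, hq, coeff_X_mul', if_neg] at this
    · norm_num at this
    · simp [Finsupp.single_apply]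
  set L := linForm v with hLdef
  have hL : Prime L := prime_linForm hv
  by_cases hw : L ∣ X 1
  · have hassoc : Associated L (X 1) := hL.associated_of_dvd prime_X1 hw
    have hLP : ¬ L ∣ P := fun h => hX1P hmonic (hassoc.dvd_iff_dvd_left.mp h)
    have hLT : ¬ L ∣ T := fun h => hX1T (hassoc.dvd_iff_dvd_left.mp h)
    obtain ⟨u, hu⟩ := hassoc
    have hle : d + 2 ≤ d + 1 := by
      apply le_of_pow_dvd_pow_mul hL (r := (u : MvPoly2) ^ (d + 1) * (P ^ (d - 1) * T))
      · intro h
        rcases hL.dvd_mul.mp h with h | h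
        · exact hL.not_unit (isUnit_of_dvd_unit h (u.isUnit.pow _))
        rcases hL.dvd_mul.mp h with h | h
        · exact hLP (hL.dvd_of_dvd_pow h)
        · exact hLT h
      · have he : X 1 ^ (d + 1) * P ^ (d - 1) * T
            = L ^ (d + 1) * ((u : MvPoly2) ^ (d + 1) * (P ^ (d - 1) * T)) := by
          rw [← hu]; ring
        rwa [he] at hdvd
    omega
  · by_cases hp : L ∣ P
    · obtain ⟨s, hs⟩ := hp
      have hLs : ¬ L ∣ s := by
        rintro ⟨t, ht⟩
        exact hdistinct v hv ⟨t, by rw [hs, ht]; ring⟩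
      have hLX0 : ¬ L ∣ X 0 := by
        intro h
        exact hX0P hP01 (((hL.associated_of_dvd prime_X0 h).dvd_iff_dvd_left).mp ⟨s, hs⟩)
      have hLT : ¬ L ∣ T := by
        intro h
        have h1 : L ∣ C (c1 d P + 1) * P := Dvd.dvd.mul_left ⟨s, hs⟩ _
        have h2 : L ∣ X 0 * P1 d P := by
          have : X 0 * P1 d P = T + C (c1 d P + 1) * P := by rw [hTdef]; ring
          rw [this]
          exact dvd_add h h1
        rcases hL.dvd_mul.mp h2 with h3 | h3
        · exact hLX0 h3
        · -- L ∣ P1, so L ∣ X 0 ^ (d - 1)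
          have h4 : L ∣ (X 0 : MvPoly2) ^ (d - 1) := by
            have h5 : (X 0 : MvPoly2) ^ (d - 1) = P - X 1 * P1 d P := by
              rw [P1_eq hd hP hmonic]; ring
            rw [h5]
            exact dvd_sub ⟨s, hs⟩ (h3.mul_left _)
          exact hLX0 (hL.dvd_of_dvd_pow h4)
      have hle : d + 2 ≤ d - 1 := by
        apply le_of_pow_dvd_pow_mul hL (r := s ^ (d - 1) * (X 1 ^ (d + 1) * T))
        · intro h
          rcases hL.dvd_mul.mp h with h | h
          · exact hLs (hL.dvd_of_dvd_pow h)
          rcases hL.dvd_mul.mp h with h | h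
          · exact hw (hL.dvd_of_dvd_pow h)
          · exact hLT h
        · have he : X 1 ^ (d + 1) * P ^ (d - 1) * T
              = L ^ (d - 1) * (s ^ (d - 1) * (X 1 ^ (d + 1) * T)) := by
            rw [hs]; ring
          rwa [he] at hdvd
      omega
    · -- L coprime to X 1 and P : use degree bound on T
      have hdvd2 : L ^ (d + 2) ∣ P ^ (d - 1) * T := by
        apply hL.pow_dvd_of_dvd_mul_left (d + 2) (a := X 1 ^ (d + 1))
        · exact fun h => hw (hL.dvd_of_dvd_pow h)
        · rw [show X 1 ^ (d + 1) * (P ^ (d - 1) * T) = X 1 ^ (d + 1) * P ^ (d - 1) * T by ring]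
          exact hdvd
      have hdvd3 : L ^ (d + 2) ∣ T := by
        apply hL.pow_dvd_of_dvd_mul_left (d + 2) (a := P ^ (d - 1))
        · exact fun h => hp (hL.dvd_of_dvd_pow h)
        · exact hdvd2
      have hThom : T.IsHomogeneous (d - 1) := by
        have h1 : (X 0 * P1 d P).IsHomogeneous (d - 1) := by
          have := (isHomogeneous_X ℂ (0 : Fin 2)).mul (P1_isHom hd hP)
          rwa [show 1 + (d - 2) = d - 1 by omega] at this
        exact h1.sub (hP.C_mul _)
      have := le_of_linForm_pow_dvd hThom hT0 hv hdvd3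
      omega

end PartTwo2
end Aux
namespace Aux

lemma linAlgHom_C (a b c d x : ℂ) : linAlgHom a b c d (C x) = C x := by
  simp [linAlgHom, algebraMap_eq]

lemma comp_matPair (B : Matrix (Fin 2) (Fin 2) ℂ) (q : Pair) :
    comp (matPair B) q = (C (B 0 0) * q.1 + C (B 0 1) * q.2,
      C (B 1 0) * q.1 + C (B 1 1) * q.2) := by
  unfold comp matPair
  congr 1 <;> simp [algebraMap_eq]

lemma comp_matPair_right (f : Pair) (B : Matrix (Fin 2) (Fin 2) ℂ) :
    comp f (matPair B) = (linAlgHom (B 0 0) (B 0 1) (B 1 0) (B 1 1) f.1,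
      linAlgHom (B 0 0) (B 0 1) (B 1 0) (B 1 1) f.2) := rfl

lemma conj_bad {f g : Pair} (hconj : Conjugate f g) {k : ℕ}
    (h : ∃ v : ℂ × ℂ, v ≠ 0 ∧ linForm v ^ k ∣ fixedForm f) :
    ∃ v : ℂ × ℂ, v ≠ 0 ∧ linForm v ^ k ∣ fixedForm g := by
  obtain ⟨A, c, hc, hg⟩ := hconj
  obtain ⟨v, hv, hdvd⟩ := h
  set M := (A : Matrix (Fin 2) (Fin 2) ℂ) with hM
  set N := ((A⁻¹ : Matrix.GeneralLinearGroup (Fin 2) ℂ) : Matrix (Fin 2) (Fin 2) ℂ) with hN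
  have hMN : M * N = 1 := A.mul_inv
  have hNM : N * M = 1 := A.inv_mul
  have mn00 : M 0 0 * N 0 0 + M 0 1 * N 1 0 = 1 := by
    have h' := congrFun (congrFun hMN 0) 0
    simpa [Matrix.mul_apply, Fin.sum_univ_two, Matrix.one_apply] using h'
  have mn01 : M 0 0 * N 0 1 + M 0 1 * N 1 1 = 0 := by
    have h' := congrFun (congrFun hMN 0) 1
    simpa [Matrix.mul_apply, Fin.sum_univ_two, Matrix.one_apply] using h'
  have mn10 : M 1 0 * N 0 0 + M 1 1 * N 1 0 = 0 := by
    have h' := congrFun (congrFun hMN 1) 0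
    simpa [Matrix.mul_apply, Fin.sum_univ_two, Matrix.one_apply] using h'
  have mn11 : M 1 0 * N 0 1 + M 1 1 * N 1 1 = 1 := by
    have h' := congrFun (congrFun hMN 1) 1
    simpa [Matrix.mul_apply, Fin.sum_univ_two, Matrix.one_apply] using h'
  have nm00 : N 0 0 * M 0 0 + N 0 1 * M 1 0 = 1 := by
    have h' := congrFun (congrFun hNM 0) 0
    simpa [Matrix.mul_apply, Fin.sum_univ_two, Matrix.one_apply] using h'
  have nm01 : N 0 0 * M 0 1 + N 0 1 * M 1 1 = 0 := by
    have h' := congrFun (congrFun hNM 0) 1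
    simpa [Matrix.mul_apply, Fin.sum_univ_two, Matrix.one_apply] using h'
  have nm10 : N 1 0 * M 0 0 + N 1 1 * M 1 0 = 0 := by
    have h' := congrFun (congrFun hNM 1) 0
    simpa [Matrix.mul_apply, Fin.sum_univ_two, Matrix.one_apply] using h'
  have nm11 : N 1 0 * M 0 1 + N 1 1 * M 1 1 = 1 := by
    have h' := congrFun (congrFun hNM 1) 1
    simpa [Matrix.mul_apply, Fin.sum_univ_two, Matrix.one_apply] using h'
  set σ := linAlgHom (N 0 0) (N 0 1) (N 1 0) (N 1 1) with hσ
  set det := M 0 0 * M 1 1 - M 0 1 * M 1 0 with hdet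
  -- adjugate identities
  have a1 : det * N 0 0 = M 1 1 := by
    rw [hdet]; linear_combination M 1 1 * mn00 - M 0 1 * mn10
  have a2 : det * N 0 1 = -(M 0 1) := by
    rw [hdet]; linear_combination M 1 1 * mn01 - M 0 1 * mn11
  have a3 : det * N 1 0 = -(M 1 0) := by
    rw [hdet]; linear_combination M 0 0 * mn10 - M 1 0 * mn00
  have a4 : det * N 1 1 = M 0 0 := by
    rw [hdet]; linear_combination M 0 0 * mn11 - M 1 0 * mn01
  have b1 : (C det * C (N 0 0) : MvPoly2) = C (M 1 1) := by rw [← map_mul, a1]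
  have b2 : (C det * C (N 0 1) : MvPoly2) = -(C (M 0 1)) := by rw [← map_mul, a2, map_neg]
  have b3 : (C det * C (N 1 0) : MvPoly2) = -(C (M 1 0)) := by rw [← map_mul, a3, map_neg]
  have b4 : (C det * C (N 1 1) : MvPoly2) = C (M 0 0) := by rw [← map_mul, a4]
  -- fixed form transformation
  have hFg : fixedForm g = C (c * det) * σ (fixedForm f) := by
    have hσF : σ (fixedForm f) = (C (N 0 0) * X 0 + C (N 0 1) * X 1) * σ f.2
        - (C (N 1 0) * X 0 + C (N 1 1) * X 1) * σ f.1 := by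
      rw [fixedForm, map_sub, map_mul, map_mul, hσ, linAlgHom_X0, linAlgHom_X1]
    rw [hg, comp_matPair_right, comp_matPair]
    show X 0 * (c • (C (M 1 0) * σ f.1 + C (M 1 1) * σ f.2))
        - X 1 * (c • (C (M 0 0) * σ f.1 + C (M 0 1) * σ f.2)) = _
    rw [hσF, smul_eq_C_mul, smul_eq_C_mul, map_mul]
    linear_combination (-(C c * X 0 * σ f.2)) * b1 - (C c * X 1 * σ f.2) * b2
      + (C c * X 0 * σ f.1) * b3 + (C c * X 1 * σ f.1) * b4
  -- image of the linear form
  have hσL : σ (linForm v)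
      = linForm (v.1 * N 1 1 - v.2 * N 0 1, v.2 * N 0 0 - v.1 * N 1 0) := by
    rw [linForm, map_sub, map_mul, map_mul, hσ, linAlgHom_C, linAlgHom_C, linAlgHom_X0,
      linAlgHom_X1, linForm]
    simp only [map_sub, map_mul]
    ring
  have hv'ne : (v.1 * N 1 1 - v.2 * N 0 1, v.2 * N 0 0 - v.1 * N 1 0) ≠ (0 : ℂ × ℂ) := by
    intro h0
    have z1 : v.1 * N 1 1 - v.2 * N 0 1 = 0 := congrArg Prod.fst h0
    have z2 : v.2 * N 0 0 - v.1 * N 1 0 = 0 := congrArg Prod.snd h0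
    have hv1 : v.1 = 0 := by
      linear_combination (-v.1) * nm11 - M 0 1 * z2 + M 1 1 * z1 + v.2 * nm01
    have hv2 : v.2 = 0 := by
      linear_combination (-v.2) * nm00 + M 0 0 * z2 - M 1 0 * z1 + v.1 * nm10
    exact hv (Prod.ext hv1 hv2)
  refine ⟨(v.1 * N 1 1 - v.2 * N 0 1, v.2 * N 0 0 - v.1 * N 1 0), hv'ne, ?_⟩
  have d1 : σ (linForm v) ^ k ∣ σ (fixedForm f) := by
    rw [← map_pow]
    exact map_dvd σ hdvd
  rw [hσL] at d1
  exact dvd_trans d1 (by rw [hFg]; exact Dvd.intro_left _ rfl)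

end Aux
/-- With `P` homogeneous of degree `d-1`, monic in `z`, with distinct roots and
`P(0,1) ≠ 0`: (i) every `f_a` is stable; (ii) not all `f_a` are conjugate. -/
theorem fa_stable_and_nonconstant (d : ℕ) (hd : 2 ≤ d) (P : MvPoly2)
    (hP : P.IsHomogeneous (d - 1))
    (hmonic : coeff (Finsupp.single 0 (d - 1)) P = 1)
    (hdistinct : ∀ v : ℂ × ℂ, v ≠ 0 → ¬ linForm v ^ 2 ∣ P)
    (hP01 : eval ![0, 1] P ≠ 0) :
    (∀ a : ℂ, Stable (d ^ 2) (fa d P a)) ∧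
    (∃ a b : ℂ, ¬ Conjugate (fa d P a) (fa d P b)) := by
  constructor
  · exact fun a => Aux.part_one hd hmonic hdistinct hP01 a
  · refine ⟨Aux.c1 d P, Aux.c1 d P + 1, ?_⟩
    intro hconj
    have h10 : ((1 : ℂ), (0 : ℂ)) ≠ (0 : ℂ × ℂ) := by
      simp [Prod.ext_iff]
    have hbad : ∃ v : ℂ × ℂ, v ≠ 0 ∧ linForm v ^ (d + 2) ∣ fixedForm (fa d P (Aux.c1 d P)) :=
      ⟨(1, 0), h10, Aux.bad_c1 hd hP hmonic⟩
    obtain ⟨v, hv, hdvd⟩ := Aux.conj_bad hconj hbad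
    exact Aux.notbad hd hP hmonic hdistinct hP01 v hv hdvd
end
end

section
/- For c ∈ ℂ define f_c(z) = (z² − 1)/(c·z² + 1). Then: (i) for every z ∈ ℂ with z⁴ ≠ 1, the second iterate f_c(f_c(z)) = ((f_c(z))² − 1)/(c·(f_c(z))² + 1) tends to −2z²/(z² + 1) as c → −1 (through c ≠ −1); (ii) the degree-2 pair (−2z², z² + w²) is conjugate to the degree-2 pair (z² + (1/4)·w², w²), i.e. the rational map −2z²/(z²+1) is Möbius-conjugate to the quadratic polynomial z² + 1/4. -/
noncomputable section

open MvPolynomial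

open Filter Topology in
/-- For `f_c(z) = (z² - 1)/(c z² + 1)`: (i) for `z⁴ ≠ 1`, the second iterate
`f_c(f_c(z))` tends to `-2z²/(z² + 1)` as `c → -1` through `c ≠ -1`; (ii) the pair
`(-2z², z² + w²)` is conjugate to the pair `(z² + (1/4)w², w²)`, i.e. `-2z²/(z²+1)` is
Möbius-conjugate to the polynomial `z² + 1/4`. -/
theorem basilica_mating_obstruction :
    (∀ z : ℂ, z ^ 4 ≠ 1 →
      Tendsto (fun c : ℂ =>
          (((z ^ 2 - 1) / (c * z ^ 2 + 1)) ^ 2 - 1) /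
            (c * ((z ^ 2 - 1) / (c * z ^ 2 + 1)) ^ 2 + 1))
        (𝓝[≠] (-1 : ℂ)) (𝓝 (-2 * z ^ 2 / (z ^ 2 + 1)))) ∧
    Conjugate (-(C 2 * X 0 ^ 2), X 0 ^ 2 + X 1 ^ 2)
      (X 0 ^ 2 + C (1 / 4 : ℂ) * X 1 ^ 2, X 1 ^ 2) := by
  constructor
  · intro z hz
    have hz2 : z ^ 2 - 1 ≠ 0 := by
      intro h
      apply hz
      have : z ^ 2 = 1 := by linear_combination h
      calc z ^ 4 = (z ^ 2) ^ 2 := by ring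
        _ = 1 := by rw [this]; ring
    have hz2' : z ^ 2 + 1 ≠ 0 := by
      intro h
      apply hz
      have : z ^ 2 = -1 := by linear_combination h
      calc z ^ 4 = (z ^ 2) ^ 2 := by ring
        _ = 1 := by rw [this]; ring
    have hz4 : (1 : ℂ) - z ^ 4 ≠ 0 := by
      intro h
      exact hz (by linear_combination -h)
    -- the simplified second iterate
    have key : Tendsto (fun c : ℂ => z ^ 2 * ((1 - c) * z ^ 2 - 2) / (c * z ^ 4 + 1))
        (𝓝 (-1 : ℂ)) (𝓝 (-2 * z ^ 2 / (z ^ 2 + 1))) := by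
      have hval : z ^ 2 * ((1 - (-1 : ℂ)) * z ^ 2 - 2) / ((-1) * z ^ 4 + 1)
          = -2 * z ^ 2 / (z ^ 2 + 1) := by
        rw [div_eq_div_iff (by intro h; exact hz4 (by linear_combination h)) hz2']
        ring
      have hcont : ContinuousAt (fun c : ℂ => z ^ 2 * ((1 - c) * z ^ 2 - 2) / (c * z ^ 4 + 1))
          (-1 : ℂ) := by
        apply ContinuousAt.div
        · fun_prop
        · fun_prop
        · intro h; exact hz4 (by linear_combination h)
      have := hcont.tendsto
      convert this using 2
      exact hval.symm
    have key' : Tendsto (fun c : ℂ => z ^ 2 * ((1 - c) * z ^ 2 - 2) / (c * z ^ 4 + 1))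
        (𝓝[≠] (-1 : ℂ)) (𝓝 (-2 * z ^ 2 / (z ^ 2 + 1))) := key.mono_left nhdsWithin_le_nhds
    refine key'.congr' ?_
    -- eventual nonvanishing of the two denominators
    have h1 : ∀ᶠ c in 𝓝[≠] (-1 : ℂ), c * z ^ 2 + 1 ≠ 0 := by
      apply eventually_nhdsWithin_of_eventually_nhds
      have : ContinuousAt (fun c : ℂ => c * z ^ 2 + 1) (-1) := by fun_prop
      apply this.eventually_ne
      intro h
      exact hz2 (by linear_combination -h)
    have h4 : ∀ᶠ c in 𝓝[≠] (-1 : ℂ), c * z ^ 4 + 1 ≠ 0 := by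
      apply eventually_nhdsWithin_of_eventually_nhds
      have : ContinuousAt (fun c : ℂ => c * z ^ 4 + 1) (-1) := by fun_prop
      apply this.eventually_ne
      intro h
      exact hz4 (by linear_combination h)
    have hne : ∀ᶠ c in 𝓝[≠] (-1 : ℂ), c ≠ (-1 : ℂ) := eventually_mem_nhdsWithin
    filter_upwards [h1, h4, hne] with c hc1 hc4 hcne
    have hc' : (1 : ℂ) + c ≠ 0 := by
      intro h; exact hcne (by linear_combination h)
    have hden : c * ((z ^ 2 - 1) / (c * z ^ 2 + 1)) ^ 2 + 1
        = ((1 + c) * (c * z ^ 4 + 1)) / ((c * z ^ 2 + 1) ^ 2) := by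
      field_simp
      ring
    have hden' : c * ((z ^ 2 - 1) / (c * z ^ 2 + 1)) ^ 2 + 1 ≠ 0 := by
      rw [hden]
      exact div_ne_zero (mul_ne_zero hc' hc4) (pow_ne_zero _ hc1)
    rw [div_eq_div_iff hc4 hden', hden]
    rw [div_pow, div_sub_one (pow_ne_zero 2 hc1), div_mul_eq_mul_div, mul_div_assoc',
      div_left_inj' (pow_ne_zero 2 hc1)]
    ring
  · -- conjugacy via M(z) = -1/(2z)
    have hdet : (!![(0 : ℂ), -(1/2); 1, 0]).det ≠ 0 := by
      simp [Matrix.det_fin_two_of]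
    refine ⟨Matrix.GeneralLinearGroup.mkOfDetNeZero _ hdet, -(1/2 : ℂ), by norm_num, ?_⟩
    have hinv : ((Matrix.GeneralLinearGroup.mkOfDetNeZero _ hdet)⁻¹ :
        Matrix.GeneralLinearGroup (Fin 2) ℂ) = ((!![(0 : ℂ), -(1/2); 1, 0])⁻¹ :
        Matrix (Fin 2) (Fin 2) ℂ) := by
      rw [Matrix.coe_units_inv]
      rfl
    have hinv2 : ((!![(0 : ℂ), -(1/2); 1, 0])⁻¹ : Matrix (Fin 2) (Fin 2) ℂ)
        = !![(0 : ℂ), 1; -2, 0] := by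
      apply Matrix.inv_eq_right_inv
      norm_num [Matrix.mul_fin_two]
      rw [← Matrix.one_fin_two]
    rw [hinv, hinv2]
    show _ = (-(1/2 : ℂ)) • comp (matPair (Matrix.GeneralLinearGroup.mkOfDetNeZero _ hdet))
      (comp _ (matPair !![(0 : ℂ), 1; -2, 0]))
    have hcoe : ((Matrix.GeneralLinearGroup.mkOfDetNeZero _ hdet :
        Matrix.GeneralLinearGroup (Fin 2) ℂ) : Matrix (Fin 2) (Fin 2) ℂ)
        = !![(0 : ℂ), -(1/2); 1, 0] := rfl
    rw [hcoe]
    simp only [matPair, comp, Matrix.cons_val', Matrix.cons_val_zero, Matrix.cons_val_one,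
      Matrix.head_cons, Matrix.empty_val', Matrix.cons_val_fin_one, Matrix.head_fin_const,
      map_add, map_mul, map_neg, map_pow, aeval_X, aeval_C, Prod.smul_mk, Prod.mk.injEq,
      Matrix.cons_val_zero, Matrix.cons_val_one]
    constructor
    all_goals
      simp only [Matrix.cons_val', Matrix.cons_val_zero, Matrix.cons_val_one, Matrix.head_cons,
        Matrix.head_fin_const, Matrix.empty_val', Matrix.cons_val_fin_one, Matrix.of_apply,
        algebraMap_eq, smul_eq_C_mul, map_neg, map_one, map_zero, map_ofNat, map_div₀]
      ring_nf
      simp only [show ((4:MvPoly2)) = C (4:ℂ) from (map_ofNat C 4).symm,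
        show ((2:MvPoly2)) = C (2:ℂ) from (map_ofNat C 2).symm, ← C_pow, ← C_mul]
      rw [mul_assoc, ← C_mul]
      norm_num
      try ring
end
end
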